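/- Let s, r, k be positive integers with (r^s, k^s)_s = 1. If a, b range with 1 ≤ a ≤ r^s, (a, r^s)_s = 1 and 1 ≤ b ≤ k^s, (b, k^s)_s = 1, then the Φ_s(r^s)·Φ_s(k^s) values a·k^s + b·r^s are pairwise distinct and each satisfies (a k^s + b r^s, r^s k^s)_s = 1; i.e., they form an s-reduced residue system modulo r^s k^s. -/

import Mathlib

open Finset

/-- Generalized s-GCD `(a,b)_s`: the largest `l^s` dividing both `a` and `b`. -/
def sgcd (s a b : ℕ) : ℕ :=
  (Nat.findGreatest (fun l => l ^ s ∣ a ∧ l ^ s ∣ b) (Nat.gcd a b)) ^ s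

/-- Klee's function `Φ_s(n)`. -/
def klee (s n : ℕ) : ℕ := ((Finset.Icc 1 n).filter (fun m => sgcd s m n = 1)).card

/-- Cohen–Ramanujan sum (exponential form). -/
noncomputable def CRsum (s r n : ℕ) : ℂ :=
  ∑ a ∈ (Finset.Icc 1 (r ^ s)).filter (fun a => sgcd s a (r ^ s) = 1),
    Complex.exp (2 * Real.pi * Complex.I * n * a / (r ^ s))

/-- Cohen–Ramanujan sum (divisor form). -/
def CRsumD (s r n : ℕ) : ℤ :=
  ∑ d ∈ r.divisors.filter (fun d => d ^ s ∣ n),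
    ArithmeticFunction.moebius (r / d) * (d : ℤ) ^ s

/-- `τ_s(m)`: number of s-th powers dividing `m`. -/
def taus (s m : ℕ) : ℕ := ((Finset.Icc 1 m).filter (fun l => l ^ s ∣ m)).card

/-- Jordan totient via tuples. -/
def jordanT (s r : ℕ) : ℕ :=
  (Finset.univ.filter (fun v : Fin s → Fin r =>
    Nat.gcd (Finset.univ.gcd (fun i => (v i : ℕ))) r = 1)).card

lemma sgcd_eq_one_iff (s a b : ℕ) (hs : 0 < s) (ha : 0 < a) :
    sgcd s a b = 1 ↔ ∀ l, l ^ s ∣ a → l ^ s ∣ b → l = 1 := by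
  unfold sgcd
  have hg : 0 < Nat.gcd a b := Nat.gcd_pos_of_pos_left b ha
  constructor
  · intro h l hla hlb
    have hl0 : l ≠ 0 := by
      rintro rfl
      rw [zero_pow hs.ne'] at hla
      omega
    have hdl : l ∣ Nat.gcd a b :=
      Nat.dvd_gcd ((dvd_pow_self l hs.ne').trans hla) ((dvd_pow_self l hs.ne').trans hlb)
    have hle := Nat.le_findGreatest (P := fun l => l ^ s ∣ a ∧ l ^ s ∣ b) (Nat.le_of_dvd hg hdl) ⟨hla, hlb⟩
    have hF : Nat.findGreatest (fun l => l ^ s ∣ a ∧ l ^ s ∣ b) (Nat.gcd a b) = 1 :=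
      (pow_eq_one_iff.mp h).resolve_right hs.ne'
    omega
  · intro h
    have hP := Nat.findGreatest_spec (m := 1) (P := fun l => l ^ s ∣ a ∧ l ^ s ∣ b) hg
      (by simp)
    have := h _ hP.1 hP.2
    rw [this, one_pow]

theorem sReduced_residue_system (s r k : ℕ) (hs : 0 < s) (hr : 0 < r) (hk : 0 < k)
    (hcop : sgcd s (r ^ s) (k ^ s) = 1) :
    (∀ a₁ b₁ a₂ b₂ : ℕ,
        1 ≤ a₁ → a₁ ≤ r ^ s → sgcd s a₁ (r ^ s) = 1 →
        1 ≤ b₁ → b₁ ≤ k ^ s → sgcd s b₁ (k ^ s) = 1 →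
        1 ≤ a₂ → a₂ ≤ r ^ s → sgcd s a₂ (r ^ s) = 1 →
        1 ≤ b₂ → b₂ ≤ k ^ s → sgcd s b₂ (k ^ s) = 1 →
        a₁ * k ^ s + b₁ * r ^ s = a₂ * k ^ s + b₂ * r ^ s → a₁ = a₂ ∧ b₁ = b₂) ∧
      (∀ a b : ℕ,
        1 ≤ a → a ≤ r ^ s → sgcd s a (r ^ s) = 1 →
        1 ≤ b → b ≤ k ^ s → sgcd s b (k ^ s) = 1 →
        sgcd s (a * k ^ s + b * r ^ s) (r ^ s * k ^ s) = 1) := by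
  have hrpos : 0 < r ^ s := pow_pos hr s
  have hkpos : 0 < k ^ s := pow_pos hk s
  -- r and k are coprime
  have hrk : Nat.Coprime r k := by
    have := (sgcd_eq_one_iff s (r ^ s) (k ^ s) hs hrpos).mp hcop (Nat.gcd r k)
      (pow_dvd_pow_of_dvd (Nat.gcd_dvd_left r k) s)
      (pow_dvd_pow_of_dvd (Nat.gcd_dvd_right r k) s)
    exact this
  have hco : Nat.Coprime (r ^ s) (k ^ s) := hrk.pow _ _
  constructor
  · intro a₁ b₁ a₂ b₂ ha₁1 ha₁2 hA₁ hb₁1 hb₁2 hB₁ ha₂1 ha₂2 hA₂ hb₂1 hb₂2 hB₂ heq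
    have h' : (a₁ : ℤ) * (k : ℤ) ^ s + (b₁ : ℤ) * (r : ℤ) ^ s
        = (a₂ : ℤ) * (k : ℤ) ^ s + (b₂ : ℤ) * (r : ℤ) ^ s := by exact_mod_cast heq
    have hc : IsCoprime ((r : ℤ) ^ s) ((k : ℤ) ^ s) := by
      have := (Nat.isCoprime_iff_coprime (m := r ^ s) (n := k ^ s)).mpr hco
      push_cast at this
      exact this
    have hdvd : ((r : ℤ) ^ s) ∣ ((a₁ : ℤ) - a₂) := by
      refine hc.dvd_of_dvd_mul_right ⟨(b₂ : ℤ) - b₁, by linear_combination h'⟩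
    have hza : (a₁ : ℤ) - a₂ = 0 := by
      refine Int.eq_zero_of_abs_lt_dvd hdvd ?_
      have h1 : (a₁ : ℤ) ≤ (r : ℤ) ^ s := by exact_mod_cast ha₁2
      have h2 : (a₂ : ℤ) ≤ (r : ℤ) ^ s := by exact_mod_cast ha₂2
      have h3 : (1 : ℤ) ≤ a₁ := by exact_mod_cast ha₁1
      have h4 : (1 : ℤ) ≤ a₂ := by exact_mod_cast ha₂1
      rw [abs_sub_lt_iff]
      omega
    have ha : a₁ = a₂ := by exact_mod_cast sub_eq_zero.mp hza
    refine ⟨ha, ?_⟩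
    subst ha
    have := Nat.add_left_cancel heq
    exact Nat.eq_of_mul_eq_mul_right hrpos this
  · intro a b ha1 ha2 hA hb1 hb2 hB
    have hNpos : 0 < a * k ^ s + b * r ^ s := by positivity
    rw [sgcd_eq_one_iff s _ _ hs hNpos]
    intro l hlN hlM
    by_contra hl1
    obtain ⟨p, pp, hpl⟩ := Nat.exists_prime_and_dvd hl1
    have hpsN : p ^ s ∣ a * k ^ s + b * r ^ s := (pow_dvd_pow_of_dvd hpl s).trans hlN
    have hprk : p ∣ r * k := by
      have h1 : p ^ s ∣ (r * k) ^ s := by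
        rw [mul_pow]
        exact (pow_dvd_pow_of_dvd hpl s).trans hlM
      exact pp.dvd_of_dvd_pow ((dvd_pow_self p hs.ne').trans h1)
    rcases (Nat.Prime.dvd_mul pp).mp hprk with hpr | hpk
    · have hpk' : Nat.Coprime p k := Nat.Coprime.coprime_dvd_left hpr hrk
      have h1 : p ^ s ∣ r ^ s := pow_dvd_pow_of_dvd hpr s
      have h2 : p ^ s ∣ b * r ^ s := h1.mul_left b
      have h3 : p ^ s ∣ a * k ^ s := by
        have := Nat.dvd_sub hpsN h2
        simpa using this
      have h4 : p ^ s ∣ a := (hpk'.pow s s).dvd_of_dvd_mul_right h3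
      have := (sgcd_eq_one_iff s a (r ^ s) hs (by omega)).mp hA p h4 h1
      exact pp.one_lt.ne' this
    · have hpr' : Nat.Coprime p r := Nat.Coprime.coprime_dvd_left hpk hrk.symm
      have h1 : p ^ s ∣ k ^ s := pow_dvd_pow_of_dvd hpk s
      have h2 : p ^ s ∣ a * k ^ s := h1.mul_left a
      have h3 : p ^ s ∣ b * r ^ s := by
        have := Nat.dvd_sub hpsN h2
        simpa using this
      have h4 : p ^ s ∣ b := (hpr'.pow s s).dvd_of_dvd_mul_right h3
      have := (sgcd_eq_one_iff s b (k ^ s) hs (by omega)).mp hB p h4 h1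
      exact pp.one_lt.ne' this
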